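/- The function s(p) = p·(ζ(a) + 1 − ζ(a·p) − p)/(1 + a·ζ'(a)) is strictly concave on the interval [0,1]: its second derivative s''(p) = (−2 − 2a·ζ'(a·p) − a²·p·ζ''(a·p))/(1 + a·ζ'(a)) is strictly negative for all p ∈ [0,1]. -/

import Mathlib

open Set Filter Topology

/-- Summability of the "derived" coefficients. -/
lemma aux_summable_deriv (e : ℕ → ℝ) (he : ∀ k, 0 ≤ e k) (R : ℝ)
    (H : ∀ r : ℝ, 0 ≤ r → r < R → Summable (fun k => e k * r ^ k))
    (r : ℝ) (hr0 : 0 ≤ r) (hrR : r < R) :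
    Summable (fun k : ℕ => ((k : ℝ) + 1) * e (k + 1) * r ^ k) := by
  obtain ⟨r', hrr', hr'R⟩ := exists_between hrR
  have hr'0 : 0 < r' := lt_of_le_of_lt hr0 hrr'
  have hsum' := H r' hr'0.le hr'R
  set M := ∑' k, e k * r' ^ k with hM
  have hle : ∀ k, e k * r' ^ k ≤ M := fun k =>
    Summable.le_tsum hsum' k (fun j _ => mul_nonneg (he j) (pow_nonneg hr'0.le j))
  have ht1 : r / r' < 1 := (div_lt_one hr'0).2 hrr'
  have ht0 : 0 ≤ r / r' := div_nonneg hr0 hr'0.le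
  have hgeo : Summable (fun k : ℕ => ((k : ℝ) + 1) * (r / r') ^ k) := by
    have h1 : Summable (fun k : ℕ => (k : ℝ) ^ 1 * (r / r') ^ k) :=
      summable_pow_mul_geometric_of_norm_lt_one 1 (by rwa [Real.norm_eq_abs, abs_of_nonneg ht0])
    have h2 : Summable (fun k : ℕ => (r / r') ^ k) :=
      summable_geometric_of_lt_one ht0 ht1
    simpa [add_mul, pow_one] using h1.add h2
  refine Summable.of_nonneg_of_le
    (fun k => mul_nonneg (mul_nonneg (by positivity) (he _)) (pow_nonneg hr0 k))
    (fun k => ?_) (hgeo.mul_left (M / r'))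

  have hrk : r ^ k = r' ^ k * (r / r') ^ k := by
    rw [div_pow]
    field_simp
  have h1 : e (k + 1) * r' ^ (k + 1) ≤ M := hle (k + 1)
  have hk0 : (0:ℝ) ≤ (k : ℝ) + 1 := by positivity
  have ht0k : (0:ℝ) ≤ (r / r') ^ k := pow_nonneg ht0 k
  calc ((k : ℝ) + 1) * e (k + 1) * r ^ k
      = (((k : ℝ) + 1) * (r / r') ^ k) * (e (k + 1) * r' ^ (k + 1)) / r' := by
        rw [hrk, pow_succ]; field_simp
    _ ≤ (((k : ℝ) + 1) * (r / r') ^ k) * M / r' := by gcongr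
    _ = (M / r') * (((k : ℝ) + 1) * (r / r') ^ k) := by ring

/-- Termwise differentiation of a power series with nonnegative coefficients. -/
lemma aux_hasDerivAt (e : ℕ → ℝ) (he : ∀ k, 0 ≤ e k) (R : ℝ)
    (H : ∀ r : ℝ, 0 ≤ r → r < R → Summable (fun k => e k * r ^ k))
    (x : ℝ) (hx : |x| < R) :
    HasDerivAt (fun y : ℝ => ∑' k : ℕ, e k * y ^ k)
      (∑' k : ℕ, ((k : ℝ) + 1) * e (k + 1) * x ^ k) x := by
  obtain ⟨b, hxb, hbR⟩ := exists_between hx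
  have hb0 : 0 < b := lt_of_le_of_lt (abs_nonneg x) hxb
  have hu : Summable (fun k : ℕ => ((k : ℝ) + 1) * e (k + 1) * b ^ k) :=
    aux_summable_deriv e he R H b hb0.le hbR
  set u : ℕ → ℝ := fun n => if n = 0 then 0 else (n : ℝ) * e n * b ^ (n - 1) with hu_def
  have hu_sum : Summable u := by
    rw [← summable_nat_add_iff 1]
    convert hu using 2 with k
    case e'_3 => rfl
    simp only [hu_def, Nat.succ_ne_zero, if_neg, Nat.add_sub_cancel]
    push_cast; ring
  have key := hasDerivAt_tsum_of_isPreconnected (g := fun (n : ℕ) (y : ℝ) => e n * y ^ n)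
    (g' := fun (n : ℕ) (y : ℝ) => e n * ((n : ℝ) * y ^ (n - 1)))
    hu_sum (isOpen_Ioo (a := -b) (b := b)) (isPreconnected_Ioo)
    (fun n y _ => (hasDerivAt_pow n y).const_mul (e n))
    (fun n y hy => ?_) (y₀ := 0) (by simp [hb0] : (0:ℝ) ∈ Ioo (-b) b) ?_
    (by constructor <;> [nlinarith [neg_abs_le x]; nlinarith [le_abs_self x]] : x ∈ Ioo (-b) b)
  · convert key using 1
    case e'_4 => rfl
    case e'_5 => rfl
    have hs1 : Summable (fun k : ℕ => e (k+1) * (((k:ℝ) + 1) * x ^ k)) := by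
      apply Summable.of_abs
      refine Summable.of_nonneg_of_le (fun k => abs_nonneg _) (fun k => ?_)
        (aux_summable_deriv e he R H |x| (abs_nonneg x) hx)
      rw [abs_mul, abs_mul, abs_of_nonneg (he _),
        abs_of_nonneg (by positivity : (0:ℝ) ≤ (k:ℝ)+1), abs_pow]
      ring_nf; exact le_refl _
    have hs2 : Summable (fun n : ℕ => e n * ((n : ℝ) * x ^ (n - 1))) := by
      rw [← summable_nat_add_iff 1]
      convert hs1 using 2 with k
      case e'_3 => rfl
      push_cast; ring_nf
    rw [Summable.tsum_eq_zero_add hs2]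
    simp only [Nat.cast_zero, zero_mul, mul_zero, zero_add]
    apply tsum_congr; intro k
    push_cast; ring
  · rw [Real.norm_eq_abs, abs_mul, abs_of_nonneg (he n), abs_mul, abs_pow,
      abs_of_nonneg (Nat.cast_nonneg n)]
    simp only [hu_def]
    rcases Nat.eq_zero_or_pos n with rfl | hn
    · simp
    · rw [if_neg hn.ne']
      have : |y| ^ (n-1) ≤ b ^ (n-1) := by
        apply pow_le_pow_left₀ (abs_nonneg y)
        rw [abs_le]; exact ⟨hy.1.le, hy.2.le⟩
      nlinarith [mul_nonneg (Nat.cast_nonneg (α := ℝ) n) (he n), pow_nonneg (abs_nonneg y) (n-1)]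
  · apply summable_of_ne_finset_zero (s := {0})
    intro k hk
    simp only [Finset.mem_singleton] at hk
    show e k * (0:ℝ) ^ k = 0
    rw [zero_pow hk, mul_zero]

set_option maxHeartbeats 1000000 in
/-- The function s(p) = p·(ζ(a) + 1 − ζ(a·p) − p)/(1 + a·ζ'(a)) is strictly
concave on [0,1]: its second derivative
s''(p) = (−2 − 2a·ζ'(a·p) − a²·p·ζ''(a·p))/(1 + a·ζ'(a)) is strictly negative on [0,1]. -/
theorem ihara_s_strictConcave
    (n : ℕ) (hn : 0 < n) (T : Matrix (Fin n) (Fin n) ℝ)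
    (hT : ∀ i j, 0 ≤ T i j) (htr : T.trace = 0)
    (R : ℝ) (hR : 0 < R)
    (hsum : ∀ x ∈ Set.Ico (0 : ℝ) R,
      Summable (fun k : ℕ => (T ^ (k + 1)).trace / (k + 1) * x ^ (k + 1)))
    (ζ : ℝ → ℝ)
    (hζ : ∀ x : ℝ, ζ x = Real.exp (∑' k : ℕ, (T ^ (k + 1)).trace / (k + 1) * x ^ (k + 1)))
    (a : ℝ) (ha : a ∈ Set.Ioo (0 : ℝ) R)
    (s : ℝ → ℝ)
    (hs : ∀ p : ℝ, s p = p * (ζ a + 1 - ζ (a * p) - p) / (1 + a * deriv ζ a)) :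
    (∀ p ∈ Set.Icc (0 : ℝ) 1,
        deriv (deriv s) p =
            (-2 - 2 * a * deriv ζ (a * p) - a ^ 2 * p * deriv (deriv ζ) (a * p)) /
              (1 + a * deriv ζ a) ∧
          deriv (deriv s) p < 0) ∧
      StrictConcaveOn ℝ (Set.Icc (0 : ℝ) 1) s := by
  obtain ⟨ha0, haR⟩ := ha
  -- entries of powers are nonnegative
  have hpow : ∀ m : ℕ, ∀ i j, 0 ≤ (T ^ m) i j := by
    intro m
    induction m with
    | zero => intro i j; by_cases h : i = j <;> simp [Matrix.one_apply, h]
    | succ m ih =>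
      intro i j
      rw [pow_succ, Matrix.mul_apply]
      exact Finset.sum_nonneg fun k _ => mul_nonneg (ih i k) (hT k j)
  have htrace : ∀ m : ℕ, 0 ≤ (T ^ m).trace := fun m =>
    Finset.sum_nonneg fun i _ => hpow m i i
  -- the coefficient sequence
  set e : ℕ → ℝ := fun k => if k = 0 then 0 else (T ^ k).trace / k with he_def
  have he_succ : ∀ k : ℕ, e (k + 1) = (T ^ (k + 1)).trace / ((k : ℝ) + 1) := by
    intro k
    simp only [he_def, Nat.succ_ne_zero, if_neg]
    push_cast; ring
  have he : ∀ k, 0 ≤ e k := by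
    intro k
    rcases Nat.eq_zero_or_pos k with rfl | hk
    · simp [he_def]
    · simp only [he_def, if_neg hk.ne']
      exact div_nonneg (htrace k) (Nat.cast_nonneg k)
  have H : ∀ r : ℝ, 0 ≤ r → r < R → Summable (fun k => e k * r ^ k) := by
    intro r hr0 hrR
    rw [← summable_nat_add_iff 1]
    have := hsum r ⟨hr0, hrR⟩
    convert this using 2 with k
    case e'_3 => rfl
    rw [he_succ]
  -- F, G1, G2 and the sums
  set e1 : ℕ → ℝ := fun k => ((k : ℝ) + 1) * e (k + 1) with he1_def
  have he1 : ∀ k, 0 ≤ e1 k := fun k => mul_nonneg (by positivity) (he _)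
  have H1 : ∀ r : ℝ, 0 ≤ r → r < R → Summable (fun k => e1 k * r ^ k) := by
    intro r hr0 hrR
    exact aux_summable_deriv e he R H r hr0 hrR
  set F : ℝ → ℝ := fun y => ∑' k : ℕ, e k * y ^ k with hF_def
  set G1 : ℝ → ℝ := fun y => ∑' k : ℕ, e1 k * y ^ k with hG1_def
  set G2 : ℝ → ℝ := fun y => ∑' k : ℕ, ((k : ℝ) + 1) * e1 (k + 1) * y ^ k with hG2_def
  -- ζ = exp ∘ F
  have hζF : ∀ x : ℝ, ζ x = Real.exp (F x) := by
    intro x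
    rw [hζ x]
    congr 1
    by_cases hsx : Summable (fun k : ℕ => e (k + 1) * x ^ (k + 1))
    · have hsx' : Summable (fun k : ℕ => e k * x ^ k) := (summable_nat_add_iff 1).1 hsx
      rw [hF_def]
      simp only
      rw [Summable.tsum_eq_zero_add hsx']
      simp only [he_def, if_pos rfl, zero_mul, zero_add]
      exact (tsum_congr fun k => by rw [← he_succ k]).symm
    · have h1 : ¬ Summable (fun k : ℕ => (T ^ (k + 1)).trace / ((k : ℝ) + 1) * x ^ (k + 1)) := by
        intro h; exact hsx (by convert h using 2 with k; rw [he_succ])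
      have h2 : ¬ Summable (fun k : ℕ => e k * x ^ k) := by
        intro h; exact hsx ((summable_nat_add_iff 1).2 h)
      rw [tsum_eq_zero_of_not_summable h1, hF_def]
      simp only
      rw [tsum_eq_zero_of_not_summable h2]
  -- derivatives of F and G1
  have hF' : ∀ x : ℝ, |x| < R → HasDerivAt F (G1 x) x := by
    intro x hx
    exact aux_hasDerivAt e he R H x hx
  have hG1' : ∀ x : ℝ, |x| < R → HasDerivAt G1 (G2 x) x :=
    fun x hx => aux_hasDerivAt e1 he1 R H1 x hx
  -- signs
  have hG1nn : ∀ x : ℝ, 0 ≤ x → 0 ≤ G1 x := fun x hx =>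
    tsum_nonneg fun k => mul_nonneg (he1 k) (pow_nonneg hx k)
  have hG2nn : ∀ x : ℝ, 0 ≤ x → 0 ≤ G2 x := fun x hx =>
    tsum_nonneg fun k => mul_nonneg (mul_nonneg (by positivity) (he1 _)) (pow_nonneg hx k)
  -- ζ', ζ''
  set Z1 : ℝ → ℝ := fun x => Real.exp (F x) * G1 x with hZ1_def
  set Z2 : ℝ → ℝ := fun x => Real.exp (F x) * (G1 x * G1 x + G2 x) with hZ2_def
  have hζeq : ζ = fun x => Real.exp (F x) := funext hζF
  have hζ' : ∀ x : ℝ, |x| < R → HasDerivAt ζ (Z1 x) x := by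
    intro x hx
    rw [hζeq]
    exact (hF' x hx).exp
  have hZ1' : ∀ x : ℝ, |x| < R → HasDerivAt Z1 (Z2 x) x := by
    intro x hx
    have := ((hF' x hx).exp).mul (hG1' x hx)
    convert this using 1
    case e'_4 => rfl
    case e'_5 => rfl
    case e'_8 => rfl
    rw [hZ2_def]; simp only; ring
  have hVopen : IsOpen {y : ℝ | |y| < R} := by
    have : {y : ℝ | |y| < R} = Set.Ioo (-R) R := by ext y; simp [abs_lt]
    rw [this]; exact isOpen_Ioo
  have hderivζ : ∀ x : ℝ, |x| < R → deriv ζ x = Z1 x := fun x hx => (hζ' x hx).deriv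
  have hderiv2ζ : ∀ x : ℝ, |x| < R → deriv (deriv ζ) x = Z2 x := by
    intro x hx
    have hev : deriv ζ =ᶠ[nhds x] Z1 :=
      Filter.eventuallyEq_of_mem (hVopen.mem_nhds hx) (fun y hy => hderivζ y hy)
    rw [hev.deriv_eq]
    exact (hZ1' x hx).deriv
  have haR' : |a| < R := by rw [abs_of_pos ha0]; exact haR
  have hDζa : deriv ζ a = Z1 a := hderivζ a haR'
  set D : ℝ := 1 + a * deriv ζ a with hD_def
  have hD : 0 < D := by
    have h1 : 0 ≤ Z1 a := mul_nonneg (Real.exp_pos _).le (hG1nn a ha0.le)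
    rw [hD_def, hDζa]
    nlinarith
  -- the open set U
  set U : Set ℝ := {p : ℝ | |a * p| < R} with hU_def
  have hUopen : IsOpen U := by
    have : U = (fun p : ℝ => a * p) ⁻¹' {y : ℝ | |y| < R} := rfl
    rw [this]
    exact hVopen.preimage (continuous_const.mul continuous_id)
  have hIccU : Set.Icc (0:ℝ) 1 ⊆ U := by
    intro p hp
    have : |a * p| = a * |p| := by rw [abs_mul, abs_of_pos ha0]
    rw [hU_def, Set.mem_setOf_eq, this]
    have h1 : |p| ≤ 1 := abs_le.2 ⟨by linarith [hp.1], hp.2⟩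
    nlinarith
  -- derivative of the map p ↦ ζ (a * p)
  have hcomp : ∀ p ∈ U, HasDerivAt (fun q : ℝ => ζ (a * q)) (Z1 (a * p) * a) p := by
    intro p hp
    have h1 : HasDerivAt (fun q : ℝ => a * q) a p := by
      simpa using (hasDerivAt_id p).const_mul a
    exact (hζ' (a * p) hp).comp p h1
  have hcompZ : ∀ p ∈ U, HasDerivAt (fun q : ℝ => Z1 (a * q)) (Z2 (a * p) * a) p := by
    intro p hp
    have h1 : HasDerivAt (fun q : ℝ => a * q) a p := by
      simpa using (hasDerivAt_id p).const_mul a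
    exact (hZ1' (a * p) hp).comp p h1
  -- first derivative of s
  set S1 : ℝ → ℝ := fun p => (ζ a + 1 - ζ (a * p) - 2 * p - a * p * Z1 (a * p)) / D with hS1_def
  have hseq : s = fun p => p * (ζ a + 1 - ζ (a * p) - p) / D := by
    funext p; rw [hs p, hD_def]
  have hs' : ∀ p ∈ U, HasDerivAt s (S1 p) p := by
    intro p hp
    rw [hseq]
    have h1 : HasDerivAt (fun q : ℝ => ζ a + 1 - ζ (a * q) - q)
        (0 - Z1 (a * p) * a - 1) p :=
      ((hasDerivAt_const p (ζ a + 1)).sub (hcomp p hp)).sub (hasDerivAt_id p)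
    have h2 := ((hasDerivAt_id p).mul h1).div_const D
    convert h2 using 1
    case e'_4 => rfl
    case e'_5 => rfl
    case e'_8 => rfl
    rw [hS1_def]
    simp only [id]
    ring
  have hS1' : ∀ p ∈ U, HasDerivAt S1
      ((-2 - 2 * a * Z1 (a * p) - a ^ 2 * p * Z2 (a * p)) / D) p := by
    intro p hp
    rw [hS1_def]
    have h1 : HasDerivAt (fun q : ℝ => a * q) a p := by
      simpa using (hasDerivAt_id p).const_mul a
    have h2 : HasDerivAt (fun q : ℝ => a * q * Z1 (a * q))
        (a * Z1 (a * p) + a * p * (Z2 (a * p) * a)) p := h1.mul (hcompZ p hp)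
    have h3 : HasDerivAt (fun q : ℝ => ζ a + 1 - ζ (a * q) - 2 * q - a * q * Z1 (a * q))
        (0 - Z1 (a * p) * a - 2 - (a * Z1 (a * p) + a * p * (Z2 (a * p) * a))) p := by
      refine HasDerivAt.sub ?_ h2
      refine HasDerivAt.sub ?_ (by simpa using (hasDerivAt_id p).const_mul 2)
      exact (hasDerivAt_const p (ζ a + 1)).sub (hcomp p hp)
    have h4 := h3.div_const D
    convert h4 using 1
    case e'_4 => rfl
    case e'_5 => rfl
    ring
  have hds : ∀ p ∈ U, deriv s p = S1 p := fun p hp => (hs' p hp).deriv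
  have hd2s : ∀ p ∈ U, deriv (deriv s) p
      = (-2 - 2 * a * Z1 (a * p) - a ^ 2 * p * Z2 (a * p)) / D := by
    intro p hp
    have hev : deriv s =ᶠ[nhds p] S1 :=
      Filter.eventuallyEq_of_mem (hUopen.mem_nhds hp) (fun q hq => hds q hq)
    rw [hev.deriv_eq]
    exact (hS1' p hp).deriv
  have hmain : ∀ p ∈ Set.Icc (0:ℝ) 1,
      deriv (deriv s) p =
        (-2 - 2 * a * deriv ζ (a * p) - a ^ 2 * p * deriv (deriv ζ) (a * p)) / D ∧
      deriv (deriv s) p < 0 := by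
    intro p hp
    have hpU : p ∈ U := hIccU hp
    have hapR : |a * p| < R := hpU
    have hap0 : 0 ≤ a * p := mul_nonneg ha0.le hp.1
    have heq : deriv (deriv s) p
        = (-2 - 2 * a * Z1 (a * p) - a ^ 2 * p * Z2 (a * p)) / D := hd2s p hpU
    constructor
    · rw [heq, hderivζ (a * p) hapR, hderiv2ζ (a * p) hapR]
    · rw [heq]
      apply div_neg_of_neg_of_pos _ hD
      have h1 : 0 ≤ Z1 (a * p) := mul_nonneg (Real.exp_pos _).le (hG1nn _ hap0)
      have h2 : 0 ≤ Z2 (a * p) := by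
        apply mul_nonneg (Real.exp_pos _).le
        have := hG1nn _ hap0
        have := hG2nn _ hap0
        nlinarith
      nlinarith [hp.1, mul_nonneg (mul_nonneg ha0.le ha0.le) (mul_nonneg hp.1 h2)]
  refine ⟨hmain, ?_⟩
  apply strictConcaveOn_of_deriv2_neg (convex_Icc 0 1)
  · intro p hp
    exact ((hs' p (hIccU hp)).continuousAt).continuousWithinAt
  · intro p hp
    rw [interior_Icc] at hp
    have := (hmain p ⟨hp.1.le, hp.2.le⟩).2
    simpa [Function.iterate_succ, Function.iterate_zero, Function.comp] using this
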